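/- Strict monotonicity of the auxiliary function Υ (Step 3 in the proof of Lemma 3.1): Let f, θ, T be as in the context, let B > θ, and fix c ∈ (T·f'(B̄), 0). Define g(x) := (f')⁻¹((c+x)/T) and Υ(x) := B̄·c + B·x − T·(g(x)·f'(g(x)) − f(g(x))) − T·f(B) for x ∈ (0, T·f'(B)). Then Υ is differentiable with Υ'(x) = B − g(x) > 0 for every x ∈ (0, T·f'(B)); in particular Υ is strictly increasing on (0, T·f'(B)) and has at most one zero in this interval. -/

import Mathlib

noncomputable section

open Set Filter

/-- The Rankine–Hugoniot speed `λ(u,v) = (f(v) - f(u)) / (v - u)`. -/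
def lamF (f : ℝ → ℝ) (u v : ℝ) : ℝ := (f v - f u) / (v - u)

/-- `y` solves the left backward-shock Cauchy problem with data `(R, B)` on
`[R / f'(B), T]`:  `y(R/f'(B)) = 0` and `y'(t) = λ((f')⁻¹((y(t)+R)/t), B̄)`.
Here `finv` denotes the inverse of `deriv f`. -/
def LeftShockSol (f finv : ℝ → ℝ) (T B Bbar R : ℝ) (y : ℝ → ℝ) : Prop :=
  y (R / deriv f B) = 0 ∧
  ∀ t ∈ Icc (R / deriv f B) T,
    HasDerivWithinAt y (lamF f (finv ((y t + R) / t)) Bbar) (Icc (R / deriv f B) T) t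

/-- `x` solves the right backward-shock Cauchy problem with data `(L, A)` on
`[L / f'(A), T]`:  `x(L/f'(A)) = 0` and `x'(t) = λ((f')⁻¹((x(t)+L)/t), Ā)`.
Here `finv` denotes the inverse of `deriv f`. -/
def RightShockSol (f finv : ℝ → ℝ) (T A Abar L : ℝ) (x : ℝ → ℝ) : Prop :=
  x (L / deriv f A) = 0 ∧
  ∀ t ∈ Icc (L / deriv f A) T,
    HasDerivWithinAt x (lamF f (finv ((x t + L) / t)) Abar) (Icc (L / deriv f A) T) t

/-- The auxiliary function `Υ` from Step 3 of the proof of Lemma 3.1. -/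
def Upsilon (f finv : ℝ → ℝ) (T B Bbar c : ℝ) (x : ℝ) : ℝ :=
  Bbar * c + B * x -
    T * (finv ((c + x) / T) * deriv f (finv ((c + x) / T)) - f (finv ((c + x) / T))) -
    T * f B

section Aux

variable {f finv : ℝ → ℝ}

theorem aux_main
    (f : ℝ → ℝ) (a : ℝ) (ha : 0 < a) (hf : ContDiff ℝ 2 f)
    (hf2 : ∀ u : ℝ, a ≤ deriv (deriv f) u)
    (finv : ℝ → ℝ) (hfinv1 : ∀ u : ℝ, finv (deriv f u) = u)
    (hfinv2 : ∀ p : ℝ, deriv f (finv p) = p)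
    (T : ℝ) (hT : 0 < T)
    (B Bbar : ℝ)
    (c : ℝ) (hc : c ∈ Set.Ioo (T * deriv f Bbar) (0:ℝ)) :
    ∀ x ∈ Set.Ioo (0:ℝ) (T * deriv f B),
        HasDerivAt (Upsilon f finv T B Bbar c) (B - finv ((c + x) / T)) x ∧
        0 < B - finv ((c + x) / T) := by
  have hfd : Differentiable ℝ f := hf.differentiable two_ne_zero
  have hf' : ContDiff ℝ 1 (deriv f) := by
    have h2 : ContDiff ℝ ((1 : ℕ) + 1) f := by exact_mod_cast hf
    exact (contDiff_succ_iff_deriv.mp h2).2.2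
  have hfd' : Differentiable ℝ (deriv f) := hf'.differentiable one_ne_zero
  have hpos : ∀ u, 0 < deriv (deriv f) u := fun u => lt_of_lt_of_le ha (hf2 u)
  have hmono : StrictMono (deriv f) := strictMono_of_deriv_pos hpos
  have hinvmono : StrictMono finv := by
    intro p q hpq
    have : deriv f (finv p) < deriv f (finv q) := by rw [hfinv2, hfinv2]; exact hpq
    exact hmono.lt_iff_lt.mp this
  have hinvsurj : Function.Surjective finv := fun u => ⟨deriv f u, hfinv1 u⟩
  have hinvcont : Continuous finv := by
    have := (StrictMono.orderIsoOfSurjective finv hinvmono hinvsurj).continuous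
    rwa [StrictMono.coe_orderIsoOfSurjective] at this
  -- derivative of finv
  have hinvderiv : ∀ p : ℝ, HasDerivAt finv (deriv (deriv f) (finv p))⁻¹ p := by
    intro p
    refine HasDerivAt.of_local_left_inverse hinvcont.continuousAt
      ((hfd' (finv p)).hasDerivAt) (hpos _).ne' ?_
    exact Filter.Eventually.of_forall hfinv2
  intro x hx
  set p : ℝ := (c + x) / T with hpdef
  set g : ℝ := finv p with hgdef
  have hgB : g < B := by
    have hpB : p < deriv f B := by
      rw [hpdef, div_lt_iff₀ hT]
      have : c + x < 0 + T * deriv f B := add_lt_add hc.2 hx.2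
      linarith [this]
    have := hinvmono hpB
    rwa [hfinv1] at this
  refine ⟨?_, by linarith⟩
  -- derivative computation
  have hparg : HasDerivAt (fun x : ℝ => (c + x) / T) (1 / T) x := by
    simpa using ((hasDerivAt_id x).const_add c).div_const T
  set κ : ℝ := (deriv (deriv f) g)⁻¹ * (1 / T) with hκdef
  have hgd : HasDerivAt (fun x : ℝ => finv ((c + x) / T)) κ x :=
    (hinvderiv p).comp x hparg
  have h1 : HasDerivAt (fun x : ℝ => finv ((c + x) / T) * (c + x))
      (κ * (c + x) + g * 1) x := hgd.mul ((hasDerivAt_id x).const_add c)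
  have h2 : HasDerivAt (fun x : ℝ => T * f (finv ((c + x) / T)))
      (T * (deriv f g * κ)) x :=
    (((hfd g).hasDerivAt.comp x hgd)).const_mul T
  have hBx : HasDerivAt (fun x : ℝ => B * x) (B * 1) x := (hasDerivAt_id x).const_mul B
  have hconst : HasDerivAt (fun _ : ℝ => Bbar * c) 0 x := hasDerivAt_const x _
  have hmain := ((hconst.add hBx).sub (h1.sub h2)).sub (hasDerivAt_const x (T * f B))
  have hfun : (fun x : ℝ => Bbar * c + B * x - (finv ((c + x) / T) * (c + x)
      - T * f (finv ((c + x) / T))) - T * f B) = Upsilon f finv T B Bbar c := by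
    funext y
    unfold Upsilon
    rw [hfinv2]
    have : T ≠ 0 := hT.ne'
    field_simp
  replace hmain : HasDerivAt (Upsilon f finv T B Bbar c)
      (0 + B * 1 - (κ * (c + x) + g * 1 - T * (deriv f g * κ)) - 0) x := by
    rw [← hfun]; exact hmain
  have hval : 0 + B * 1 - (κ * (c + x) + g * 1 - T * (deriv f g * κ)) - 0 = B - g := by
    rw [hgdef, hfinv2, hpdef]
    have hT0 : T ≠ 0 := hT.ne'
    field_simp
    ring
  rwa [hval] at hmain

end Aux

/-- **Step 3 of the proof of Lemma 3.1**: strict monotonicity of the auxiliary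
function `Υ`. -/
theorem upsilon_strict_mono
    (f : ℝ → ℝ) (a : ℝ) (ha : 0 < a) (hf : ContDiff ℝ 2 f)
    (hf2 : ∀ u : ℝ, a ≤ deriv (deriv f) u)
    (θ : ℝ) (hθ : deriv f θ = 0)
    (finv : ℝ → ℝ) (hfinv1 : ∀ u : ℝ, finv (deriv f u) = u)
    (hfinv2 : ∀ p : ℝ, deriv f (finv p) = p)
    (T : ℝ) (hT : 0 < T)
    (B Bbar : ℝ) (hB : θ < B) (hBbar1 : Bbar ≤ θ) (hBbar2 : f Bbar = f B)
    (c : ℝ) (hc : c ∈ Ioo (T * deriv f Bbar) (0:ℝ)) :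
    (∀ x ∈ Ioo (0:ℝ) (T * deriv f B),
        HasDerivAt (Upsilon f finv T B Bbar c) (B - finv ((c + x) / T)) x ∧
        0 < B - finv ((c + x) / T)) ∧
    StrictMonoOn (Upsilon f finv T B Bbar c) (Ioo (0:ℝ) (T * deriv f B)) ∧
    (∀ x₁ ∈ Ioo (0:ℝ) (T * deriv f B), ∀ x₂ ∈ Ioo (0:ℝ) (T * deriv f B),
        Upsilon f finv T B Bbar c x₁ = 0 → Upsilon f finv T B Bbar c x₂ = 0 →
          x₁ = x₂) := by
  have key := aux_main f a ha hf hf2 finv hfinv1 hfinv2 T hT B Bbar c hc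
  have hsm : StrictMonoOn (Upsilon f finv T B Bbar c) (Ioo (0:ℝ) (T * deriv f B)) := by
    refine strictMonoOn_of_deriv_pos (convex_Ioo _ _) ?_ ?_
    · intro x hx
      exact ((key x hx).1.differentiableAt).continuousAt.continuousWithinAt
    · intro x hx
      rw [interior_Ioo] at hx
      rw [(key x hx).1.deriv]
      exact (key x hx).2
  refine ⟨key, hsm, ?_⟩
  intro x₁ hx₁ x₂ hx₂ h₁ h₂
  exact hsm.injOn hx₁ hx₂ (h₁.trans h₂.symm)
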